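/- Lemma 2.10: Let θ_X and θ_Y be fully invariant congruences on F = FreeMonoid ℕ each of which contains (x^k, x^{k+1}) for some k ≥ 1 (the corresponding varieties X and Y are aperiodic). If (x^n, x^m) ∈ θ_X ⊔ θ_Y for some 1 ≤ n < m (i.e. the meet X ∧ Y satisfies the non-trivial identity x^n ≈ x^m), then (x^n, x^m) ∈ θ_X or (x^n, x^m) ∈ θ_Y. -/

import Mathlib

/-! Common definitions: words, fully invariant congruences, identities and
named varieties from the paper. -/

/-- The free monoid over the countably infinite alphabet `ℕ`. -/
abbrev FM : Type := FreeMonoid ℕ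

/-- The letters `x, y, z, s, t, h` (pairwise distinct elements of `ℕ`). -/
def xL : FM := FreeMonoid.of 0
def yL : FM := FreeMonoid.of 1
def zL : FM := FreeMonoid.of 2
def sL : FM := FreeMonoid.of 3
def tL : FM := FreeMonoid.of 4
def hL : FM := FreeMonoid.of 5
/-- The indexed letters `z_i` and `t_i` (0-based; pairwise distinct, and distinct
from the named letters above). -/
def zV (i : ℕ) : FM := FreeMonoid.of (10 + 2 * i)
def tV (i : ℕ) : FM := FreeMonoid.of (11 + 2 * i)

/-- A congruence on the free monoid is fully invariant if it is stable under all
monoid endomorphisms. -/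
def IsFullyInvariant (θ : Con FM) : Prop :=
  ∀ (σ : FM →* FM) (u v : FM), θ u v → θ (σ u) (σ v)

/-- The smallest fully invariant congruence on `FM` containing a set of identities. -/
def fiCon (E : Set (FM × FM)) : Con FM :=
  sInf {c : Con FM | IsFullyInvariant c ∧ ∀ p ∈ E, c p.1 p.2}

/-- Two congruences (relations) permute: `α ∘ β = β ∘ α`. -/
def Permute (α β : Con FM) : Prop :=
  Relation.Comp (⇑α) (⇑β) = Relation.Comp (⇑β) (⇑α)

/-- A monoid `M` satisfies the identity `p.1 ≈ p.2`. -/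
def MSatisfies (M : Type*) [Monoid M] (p : FM × FM) : Prop :=
  ∀ φ : FM →* M, φ p.1 = φ p.2

/-- A monoid `M` satisfies all identities of a congruence `θ`. -/
def SatisfiesAll (θ : Con FM) (M : Type*) [Monoid M] : Prop :=
  ∀ u v : FM, θ u v → MSatisfies M (u, v)

/-- Every element of the monoid `M` has a two-sided inverse, i.e. `M` is a group. -/
def IsGroupMonoid (M : Type*) [Monoid M] : Prop :=
  ∀ m : M, ∃ m' : M, m * m' = 1 ∧ m' * m = 1

/-- The dual of a congruence: `θ^δ = {(rev u, rev v) : (u, v) ∈ θ}`. -/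
def dualCon (θ : Con FM) : Con FM where
  r a b := θ a.reverse b.reverse
  iseqv := ⟨fun _ => θ.refl _, fun h => θ.symm h, fun h h' => θ.trans h h'⟩
  mul' := fun {a b c d} h₁ h₂ => by
    show θ (a * c).reverse (b * d).reverse
    rw [FreeMonoid.reverse_mul, FreeMonoid.reverse_mul]
    exact θ.mul h₂ h₁

/-- σ1 : `xysxty ≈ yxsxty`. -/
def idσ1 : FM × FM := (xL*yL*sL*xL*tL*yL, yL*xL*sL*xL*tL*yL)
/-- σ2 : `xsytxy ≈ xsytyx`. -/
def idσ2 : FM × FM := (xL*sL*yL*tL*xL*yL, xL*sL*yL*tL*yL*xL)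
/-- σ3 : `xsxyty ≈ xsyxty`. -/
def idσ3 : FM × FM := (xL*sL*xL*yL*tL*yL, xL*sL*yL*xL*tL*yL)
/-- α1 : `xysxtxhy ≈ yxsxtxhy`. -/
def idα1 : FM × FM := (xL*yL*sL*xL*tL*xL*hL*yL, yL*xL*sL*xL*tL*xL*hL*yL)
/-- α2 : `xysxtyhx ≈ yxsxtyhx`. -/
def idα2 : FM × FM := (xL*yL*sL*xL*tL*yL*hL*xL, yL*xL*sL*xL*tL*yL*hL*xL)
/-- α3 : `xysytxhx ≈ yxsytxhx`. -/
def idα3 : FM × FM := (xL*yL*sL*yL*tL*xL*hL*xL, yL*xL*sL*yL*tL*xL*hL*xL)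

/-- `aIdent i` is the identity `α_i` for `i ∈ {1, 2, 3}`. -/
def aIdent (i : ℕ) : FM × FM := if i = 1 then idα1 else if i = 2 then idα2 else idα3
/-- `bIdent i` is `β_i`, obtained from `α_i` by reversing both sides. -/
def bIdent (i : ℕ) : FM × FM := ((aIdent i).1.reverse, (aIdent i).2.reverse)

/-- The ordered product `f 0 * f 1 * ⋯ * f (n-1)`. -/
def prodRange (n : ℕ) (f : ℕ → FM) : FM := ((List.range n).map f).prod
/-- The ordered product `f 0 * f 1 * ⋯ * f (n-1)` over `Fin n`. -/
def prodFin (n : ℕ) (f : Fin n → FM) : FM := ((List.finRange n).map f).prod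

/-- The word `w_n[π,τ]` (0-based indices). -/
def wWord (n : ℕ) (π τ : Equiv.Perm (Fin n)) : FM :=
  prodRange n (fun i => zV i * tV i) * xL *
    prodFin n (fun i => zV (π i) * zV (n + τ i)) * xL *
    prodRange n (fun i => tV (n + i) * zV (n + i))

/-- The word `w_n'[π,τ]`. -/
def wWord' (n : ℕ) (π τ : Equiv.Perm (Fin n)) : FM :=
  prodRange n (fun i => zV i * tV i) * (xL * xL) *
    prodFin n (fun i => zV (π i) * zV (n + τ i)) *
    prodRange n (fun i => tV (n + i) * zV (n + i))

/-- The word `c_{n,m}[ρ]`. -/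
def cWord (n m : ℕ) (ρ : Equiv.Perm (Fin (n + m))) : FM :=
  prodRange n (fun i => zV i * tV i) * (xL * yL) * tL *
    prodRange m (fun i => zV (n + i) * tV (n + i)) * xL *
    prodFin (n + m) (fun i => zV (ρ i)) * yL

/-- The word `c'_{n,m}[ρ]`. -/
def cWord' (n m : ℕ) (ρ : Equiv.Perm (Fin (n + m))) : FM :=
  prodRange n (fun i => zV i * tV i) * (yL * xL) * tL *
    prodRange m (fun i => zV (n + i) * tV (n + i)) * xL *
    prodFin (n + m) (fun i => zV (ρ i)) * yL

/-- The word `c_{n,m,k}[ρ]`. -/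
def cWord3 (n m k : ℕ) (ρ : Equiv.Perm (Fin (n + m + k))) : FM :=
  prodRange n (fun i => zV i * tV i) * (xL * yL) * tL *
    prodRange m (fun i => zV (n + i) * tV (n + i)) * xL *
    prodFin (n + m + k) (fun i => zV (ρ i)) * yL *
    prodRange k (fun i => tV (n + m + i) * zV (n + m + i))

/-- The word `c'_{n,m,k}[ρ]`. -/
def cWord3' (n m k : ℕ) (ρ : Equiv.Perm (Fin (n + m + k))) : FM :=
  prodRange n (fun i => zV i * tV i) * (yL * xL) * tL *
    prodRange m (fun i => zV (n + i) * tV (n + i)) * xL *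
    prodFin (n + m + k) (fun i => zV (ρ i)) * yL *
    prodRange k (fun i => tV (n + m + i) * zV (n + m + i))

/-- The equational theory of `D_∞`. -/
def θDinf : Con FM :=
  fiCon {(xL^2, xL^3), (xL^2 * yL, yL * xL^2), idσ1, idσ2, idσ3}
/-- The equational theory of `N`. -/
def θN : Con FM :=
  fiCon {(xL^2, xL^3), (xL^2 * yL, yL * xL^2), (xL*yL*xL*zL*xL, xL^2*yL*zL), idσ2, idσ3}
/-- The equational theory of `K`. -/
def θK : Con FM :=
  fiCon {(xL^2*yL, xL^2*yL*xL), (xL*yL*xL, xL*yL*xL^2), (xL^2*yL^2, yL^2*xL^2)}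
/-- The identity basis of `P_n`. -/
def basisP (n : ℕ) : Set (FM × FM) :=
  {(xL^n, xL^(n+1)), (xL^n * yL, yL * xL^n), (xL^2*yL, xL*yL*xL)}
/-- The equational theory of `P_n`. -/
def θP (n : ℕ) : Con FM := fiCon (basisP n)
/-- The equational theory of `R`. -/
def θR : Con FM :=
  fiCon ({(xL^2, xL^3), (xL^2*yL, yL*xL^2), idσ1, idσ2} ∪
    {p : FM × FM | ∃ (n : ℕ) (π τ : Equiv.Perm (Fin n)),
        1 ≤ n ∧ p = (wWord n π τ, wWord' n π τ)})
/-- The equational theory of `Q_{r,s}`. -/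
def θQ (r s : ℕ) : Con FM :=
  fiCon ({(xL^2, xL^3), (xL^2*yL, yL*xL^2), idσ3} ∪
    {p : FM × FM | ∃ i : ℕ, (i = 1 ∨ i = 2 ∨ i = 3) ∧ i ≠ r ∧ p = aIdent i} ∪
    {p : FM × FM | ∃ j : ℕ, (j = 1 ∨ j = 2 ∨ j = 3) ∧ j ≠ s ∧ p = bIdent j} ∪
    {p : FM × FM | ∃ (n m : ℕ) (ρ : Equiv.Perm (Fin (n + m))),
        p = (cWord n m ρ, cWord' n m ρ) ∨
        p = ((cWord n m ρ).reverse, (cWord' n m ρ).reverse)})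
/-- The equational theory of the variety `SL` of semilattice monoids. -/
def θSL : Con FM := fiCon {(xL, xL^2), (xL*yL, yL*xL)}

/-- `u` is a factor (contiguous subword) of `w`. -/
def IsFactor (u w : FM) : Prop := ∃ p q : FM, p * u * q = w

lemma isFactor_left {a b w : FM} (h : IsFactor (a * b) w) : IsFactor a w := by
  obtain ⟨p, q, hpq⟩ := h
  exact ⟨p, b * q, by rw [← hpq]; simp [mul_assoc]⟩

lemma isFactor_right {a b w : FM} (h : IsFactor (a * b) w) : IsFactor b w := by
  obtain ⟨p, q, hpq⟩ := h
  exact ⟨p * a, q, by rw [← hpq]; simp [mul_assoc]⟩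

/-- The Rees congruence associated with the ideal of non-factors of `w`. -/
def reesCon (w : FM) : Con FM where
  r u v := u = v ∨ (¬ IsFactor u w ∧ ¬ IsFactor v w)
  iseqv := by
    refine ⟨fun _ => Or.inl rfl, ?_, ?_⟩
    · intro a b h
      rcases h with rfl | ⟨h1, h2⟩
      · exact Or.inl rfl
      · exact Or.inr ⟨h2, h1⟩
    · intro a b c h h'
      rcases h with rfl | ⟨h1, h2⟩
      · exact h'
      · rcases h' with rfl | ⟨h3, h4⟩
        · exact Or.inr ⟨h1, h2⟩
        · exact Or.inr ⟨h1, h4⟩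
  mul' := by
    rintro a b c d (rfl | ⟨h1, h2⟩) (rfl | ⟨h3, h4⟩)
    · exact Or.inl rfl
    · exact Or.inr ⟨fun h => h3 (isFactor_right h), fun h => h4 (isFactor_right h)⟩
    · exact Or.inr ⟨fun h => h1 (isFactor_left h), fun h => h2 (isFactor_left h)⟩
    · exact Or.inr ⟨fun h => h1 (isFactor_left h), fun h => h2 (isFactor_left h)⟩

/-- The Rees quotient monoid `S(w)`. -/
abbrev SMon (w : FM) : Type := (reesCon w).Quotient

/-- The number of occurrences of the letter `a` in the word `w`. -/
def occ (w : FM) (a : ℕ) : ℕ := (FreeMonoid.toList w).count a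

/-- A word in which every letter occurs at most once. -/
def LinearW (w : FM) : Prop := ∀ a : ℕ, occ w a ≤ 1

/-- Assemble the word `b0 * t_1 * b_1 * ⋯ * t_m * b_m` from a first block and a list
of (simple letter, block) pairs. -/
def assemble (b0 : FM) (rest : List (ℕ × FM)) : FM :=
  b0 * (rest.map (fun p => FreeMonoid.of p.1 * p.2)).prod

/-- `(b0, rest)` is the decomposition of `w` into alternating simple letters and blocks
consisting of multiple letters. -/
def IsDecomposition (w : FM) (b0 : FM) (rest : List (ℕ × FM)) : Prop :=
  w = assemble b0 rest ∧
  (∀ p ∈ rest, occ w p.1 = 1) ∧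
  (∀ a ∈ FreeMonoid.toList b0, 2 ≤ occ w a) ∧
  (∀ p ∈ rest, ∀ a ∈ FreeMonoid.toList p.2, 2 ≤ occ w a)

/-- The identity `u ≈ v` is linear-balanced. -/
def LinearBalanced (u v : FM) : Prop :=
  ∃ (b0 c0 : FM) (urest vrest : List (ℕ × FM)),
    IsDecomposition u b0 urest ∧ IsDecomposition v c0 vrest ∧
    urest.map Prod.fst = vrest.map Prod.fst ∧
    ∀ a : ℕ, (2 ≤ occ u a ∨ 2 ≤ occ v a) →
      occ b0 a = occ c0 a ∧ occ b0 a ≤ 1 ∧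
      ∀ q ∈ urest.zip vrest, occ q.1.2 a = occ q.2.2 a ∧ occ q.1.2 a ≤ 1

/-- `w` is an isoterm for `θ`. -/
def IsIsoterm (θ : Con FM) (w : FM) : Prop := ∀ w' : FM, θ w w' → w' = w

section Aux210

/-- The length of a free-monoid word. -/
def wlen (u : FM) : ℕ := (FreeMonoid.toList u).length

lemma wlen_mul (u v : FM) : wlen (u * v) = wlen u + wlen v := by
  simp [wlen, FreeMonoid.toList_mul]

lemma wlen_xpow (a : ℕ) : wlen (xL ^ a) = a := by
  induction a with
  | zero => rfl
  | succ a ih => rw [pow_succ, wlen_mul, ih]; rfl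

/-- The constant endomorphism sending every letter to `x`. -/
def cst : FM →* FM := FreeMonoid.lift (fun _ => xL)

lemma cst_eq (u : FM) : cst u = xL ^ (wlen u) := by
  induction u using FreeMonoid.recOn with
  | one => simp [wlen]
  | of_mul a u ih =>
      rw [map_mul, ih]
      have : wlen (FreeMonoid.of a * u) = wlen u + 1 := by
        simp [wlen, FreeMonoid.toList_mul]
      rw [this, pow_succ']
      congr 1

lemma pow_rel_ge (θ : Con FM) (k : ℕ) (hk : θ (xL ^ k) (xL ^ (k + 1))) :
    ∀ a b : ℕ, k ≤ a → k ≤ b → θ (xL ^ a) (xL ^ b) := by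
  have key : ∀ e : ℕ, θ (xL ^ k) (xL ^ (k + e)) := by
    intro e
    induction e with
    | zero => exact θ.refl _
    | succ e ih =>
        refine θ.trans ih ?_
        have := θ.mul hk (θ.refl (xL ^ e))
        rw [← pow_add, ← pow_add] at this
        have h1 : k + e = k + e := rfl
        have h2 : k + 1 + e = k + (e + 1) := by omega
        rwa [h2] at this
  intro a b ha hb
  have h1 : θ (xL ^ k) (xL ^ a) := by
    have := key (a - k); rwa [Nat.add_sub_cancel' ha] at this
  have h2 : θ (xL ^ k) (xL ^ b) := by
    have := key (b - k); rwa [Nat.add_sub_cancel' hb] at this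
  exact θ.trans (θ.symm h1) h2

lemma reach (θ : Con FM) (k : ℕ) (hk : θ (xL ^ k) (xL ^ (k + 1)))
    {a b : ℕ} (hab : a < b) (hθ : θ (xL ^ a) (xL ^ b)) :
    ∀ c : ℕ, k ≤ c → θ (xL ^ a) (xL ^ c) := by
  have key : ∀ t : ℕ, θ (xL ^ a) (xL ^ (a + t * (b - a))) := by
    intro t
    induction t with
    | zero => simpa using θ.refl (xL ^ a)
    | succ t ih =>
        refine θ.trans ih ?_
        have := θ.mul hθ (θ.refl (xL ^ (t * (b - a))))
        rw [← pow_add, ← pow_add] at this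
        have h1 : a + t * (b - a) = a + t * (b - a) := rfl
        have h2 : b + t * (b - a) = a + (t + 1) * (b - a) := by
          rw [Nat.succ_mul]; omega
        rwa [h2] at this
  intro c hc
  have hbig : k ≤ a + (k + 1) * (b - a) := by
    have : 1 ≤ b - a := by omega
    nlinarith
  exact θ.trans (key (k + 1)) (pow_rel_ge θ k hk _ c hbig hc)

/-- The set of exponents involved in a nontrivial power relation of `θ`. -/
def Spow (θ : Con FM) (a : ℕ) : Prop := ∃ b : ℕ, a ≠ b ∧ θ (xL ^ a) (xL ^ b)

lemma Spow_rel_ge (θ : Con FM) (k : ℕ) (hk : θ (xL ^ k) (xL ^ (k + 1)))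
    {a : ℕ} (ha : Spow θ a) : ∀ c : ℕ, k ≤ c → θ (xL ^ a) (xL ^ c) := by
  obtain ⟨b, hne, hθ⟩ := ha
  intro c hc
  rcases lt_or_gt_of_ne hne with hab | hba
  · exact reach θ k hk hab hθ c hc
  · exact θ.trans hθ (reach θ k hk hba (θ.symm hθ) c hc)

lemma Spow_rel (θ : Con FM) (k : ℕ) (hk : θ (xL ^ k) (xL ^ (k + 1)))
    {a b : ℕ} (ha : Spow θ a) (hb : Spow θ b) : θ (xL ^ a) (xL ^ b) :=
  θ.trans (Spow_rel_ge θ k hk ha k le_rfl)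
    (θ.symm (Spow_rel_ge θ k hk hb k le_rfl))

lemma Spow_succ (θ : Con FM) (k : ℕ) (hk : θ (xL ^ k) (xL ^ (k + 1)))
    {a : ℕ} (ha : Spow θ a) : Spow θ (a + 1) := by
  have h1 : θ (xL ^ a) (xL ^ (k + a + 1)) :=
    Spow_rel_ge θ k hk ha (k + a + 1) (by omega)
  have h2 := θ.mul h1 (θ.refl xL)
  rw [← pow_succ, ← pow_succ] at h2
  exact ⟨k + a + 1 + 1, by omega, h2⟩

lemma Spow_add (θ : Con FM) (k : ℕ) (hk : θ (xL ^ k) (xL ^ (k + 1)))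
    {a : ℕ} (ha : Spow θ a) (c : ℕ) : Spow θ (a + c) := by
  induction c with
  | zero => exact ha
  | succ c ih => exact Spow_succ θ k hk ih

lemma Spow_mono (θ : Con FM) (k : ℕ) (hk : θ (xL ^ k) (xL ^ (k + 1)))
    {a b : ℕ} (ha : Spow θ a) (hab : a ≤ b) : Spow θ b := by
  have := Spow_add θ k hk ha (b - a)
  rwa [Nat.add_sub_cancel' hab] at this

end Aux210

/-- **Lemma 2.10.** If two aperiodic monoid varieties are such that their meet
satisfies a non-trivial identity `x^n ≈ x^m`, then this identity holds in one of
them. -/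
theorem aperiodic_power_identity_in_join (θX θY : Con FM)
    (hfiX : IsFullyInvariant θX) (hfiY : IsFullyInvariant θY)
    (hapX : ∃ k : ℕ, 1 ≤ k ∧ θX (xL ^ k) (xL ^ (k + 1)))
    (hapY : ∃ k : ℕ, 1 ≤ k ∧ θY (xL ^ k) (xL ^ (k + 1)))
    (n m : ℕ) (hn : 1 ≤ n) (hnm : n < m)
    (h : (θX ⊔ θY) (xL ^ n) (xL ^ m)) :
    θX (xL ^ n) (xL ^ m) ∨ θY (xL ^ n) (xL ^ m) := by
  obtain ⟨kX, -, hkX⟩ := hapX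
  obtain ⟨kY, -, hkY⟩ := hapY
  -- the union of the two exponent sets
  set SS : ℕ → Prop := fun a => Spow θX a ∨ Spow θY a with hSS
  have SS_add : ∀ {a : ℕ}, SS a → ∀ c : ℕ, SS (a + c) := by
    rintro a (ha | ha) c
    · exact Or.inl (Spow_add θX kX hkX ha c)
    · exact Or.inr (Spow_add θY kY hkY ha c)
  -- the bounding congruence
  let D : Con FM :=
    { r := fun u v => wlen u = wlen v ∨ (SS (wlen u) ∧ SS (wlen v))
      iseqv := by
        refine ⟨fun _ => Or.inl rfl, ?_, ?_⟩
        · rintro u v (h | ⟨h1, h2⟩)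
          · exact Or.inl h.symm
          · exact Or.inr ⟨h2, h1⟩
        · rintro u v w (h | ⟨h1, h2⟩) (h' | ⟨h3, h4⟩)
          · exact Or.inl (h.trans h')
          · exact Or.inr ⟨h ▸ h3, h4⟩
          · exact Or.inr ⟨h1, h' ▸ h2⟩
          · exact Or.inr ⟨h1, h4⟩
      mul' := by
        intro u v u' v' h h'
        show wlen (u * u') = wlen (v * v') ∨
          (SS (wlen (u * u')) ∧ SS (wlen (v * v')))
        rw [wlen_mul, wlen_mul]
        rcases h with h | ⟨h1, h2⟩ <;> rcases h' with h' | ⟨h3, h4⟩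
        · exact Or.inl (by omega)
        · exact Or.inr ⟨by rw [Nat.add_comm]; exact SS_add h3 _,
            by rw [Nat.add_comm]; exact SS_add h4 _⟩
        · exact Or.inr ⟨SS_add h1 _, SS_add h2 _⟩
        · exact Or.inr ⟨SS_add h1 _, SS_add h2 _⟩ }
  have hXD : θX ≤ D := by
    intro u v huv
    by_cases hlen : wlen u = wlen v
    · exact Or.inl hlen
    · have hpow : θX (xL ^ wlen u) (xL ^ wlen v) := by
        have := hfiX cst u v huv
        rwa [cst_eq, cst_eq] at this
      exact Or.inr ⟨Or.inl ⟨wlen v, hlen, hpow⟩,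
        Or.inl ⟨wlen u, fun e => hlen e.symm, θX.symm hpow⟩⟩
  have hYD : θY ≤ D := by
    intro u v huv
    by_cases hlen : wlen u = wlen v
    · exact Or.inl hlen
    · have hpow : θY (xL ^ wlen u) (xL ^ wlen v) := by
        have := hfiY cst u v huv
        rwa [cst_eq, cst_eq] at this
      exact Or.inr ⟨Or.inr ⟨wlen v, hlen, hpow⟩,
        Or.inr ⟨wlen u, fun e => hlen e.symm, θY.symm hpow⟩⟩
  have hD : D (xL ^ n) (xL ^ m) := sup_le hXD hYD h
  rcases hD with hlen | ⟨hSn, -⟩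
  · rw [wlen_xpow, wlen_xpow] at hlen; omega
  · rw [wlen_xpow] at hSn
    rcases hSn with hn' | hn'
    · exact Or.inl (Spow_rel θX kX hkX hn'
        (Spow_mono θX kX hkX hn' (le_of_lt hnm)))
    · exact Or.inr (Spow_rel θY kY hkY hn'
        (Spow_mono θY kY hkY hn' (le_of_lt hnm)))
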